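/- arXiv:1912.10968 — 8 statements merged into one kernel-verified Lean document; each statement's English description precedes it below -/
import Mathlib

section
/- Let A be a commutative ring, I ⊆ A a finitely generated ideal, and M a derived I-complete A-module. Then the following are equivalent: (1) for every t ∈ I, the localization M[1/t] is the zero module (equivalently, every element of M is annihilated by a power of t for each t ∈ I); (2) there exists r ≥ 1 such that I^r · M = 0; (3) there exists r ≥ 1 such that for all n ≥ 1, I^r · (M/I^n M) = 0 (equivalently, I^r M ⊆ I^n M for all n). -/
/-- `Φ_x(M) : (∏ ℕ, M) → (∏ ℕ, M)`, `(m_n)_n ↦ (m_n − x • m_{n+1})_n`. -/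
def derivedCompletionPhi {A : Type*} [CommRing A] (x : A) (M : Type*) [AddCommGroup M]
    [Module A M] : (ℕ → M) → (ℕ → M) :=
  fun m n => m n - x • m (n + 1)

/-- A module `M` is derived `x`-complete if `Φ_x(M)` is bijective. -/
def IsDerivedComplete {A : Type*} [CommRing A] (x : A) (M : Type*) [AddCommGroup M]
    [Module A M] : Prop :=
  Function.Bijective (derivedCompletionPhi x M)

section Aux

variable {A : Type*} [CommRing A] {M : Type*} [AddCommGroup M] [Module A M]

/-- The submodule of elements admitting a `g`-division chain with defects in `B`. -/
def chainsMod (g : A) (B : Submodule A M) : Submodule A M where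
  carrier := {m | ∃ c : ℕ → M, c 0 = m ∧ ∀ n, c n - g • c (n + 1) ∈ B}
  add_mem' := by
    rintro a b ⟨c, hc0, hc⟩ ⟨d, hd0, hd⟩
    refine ⟨c + d, by simp [hc0, hd0], fun n => ?_⟩
    have h := B.add_mem (hc n) (hd n)
    convert h using 1
    simp only [Pi.add_apply, smul_add]
    abel
  zero_mem' := ⟨0, rfl, fun n => by simp⟩
  smul_mem' := by
    rintro a m ⟨c, hc0, hc⟩
    refine ⟨a • c, by simp [hc0], fun n => ?_⟩
    have h := B.smul_mem a (hc n)
    convert h using 1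
    simp only [Pi.smul_apply, smul_sub, smul_comm a g]

theorem mem_chainsMod {g : A} {B : Submodule A M} {m : M} :
    m ∈ chainsMod g B ↔ ∃ c : ℕ → M, c 0 = m ∧ ∀ n, c n - g • c (n + 1) ∈ B :=
  Iff.rfl

theorem chainsMod_idem (g : A) (B : Submodule A M) :
    chainsMod g (chainsMod g B) ≤ chainsMod g B := by
  rintro m ⟨c, hc0, hc⟩
  choose u hu0 hu using fun n => mem_chainsMod.mp (hc n)
  refine ⟨fun n => c n + ∑ k ∈ Finset.range n, u k (n - k), by simp [hc0], fun n => ?_⟩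
  have e1 : ∑ k ∈ Finset.range (n + 1), u k (n + 1 - k)
      = (∑ k ∈ Finset.range n, u k (n - k + 1)) + u n 1 := by
    rw [Finset.sum_range_succ]
    congr 1
    · exact Finset.sum_congr rfl fun k hk => by
        have := Finset.mem_range.mp hk; congr 1; omega
    · congr 1; omega
  have key : (c n + ∑ k ∈ Finset.range n, u k (n - k))
      - g • (c (n + 1) + ∑ k ∈ Finset.range (n + 1), u k (n + 1 - k))
      = (u n 0 - g • u n 1)
        + ∑ k ∈ Finset.range n, (u k (n - k) - g • u k (n - k + 1)) := by
    rw [e1, hu0 n]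
    simp only [smul_add, Finset.sum_sub_distrib, Finset.smul_sum]
    abel
  rw [key]
  exact B.add_mem (hu n 0) (Submodule.sum_mem _ fun k _ => hu k _)

theorem mem_span_finset_smul {s : Finset A} {B : Submodule A M} {x : M}
    (hx : x ∈ Ideal.span (↑s : Set A) • B) :
    ∃ γ : A → M, (∀ f, γ f ∈ B) ∧ x = ∑ f ∈ s, f • γ f := by
  refine Submodule.smul_induction_on hx ?_ ?_
  · intro a ha b hb
    obtain ⟨c, -, hc⟩ := Submodule.mem_span_finset.mp ha
    refine ⟨fun f => c f • b, fun f => B.smul_mem _ hb, ?_⟩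
    rw [← hc, Finset.sum_smul]
    exact Finset.sum_congr rfl fun i _ => by
      rw [smul_eq_mul, mul_comm, mul_smul]
  · rintro x y ⟨γ, hγ, rfl⟩ ⟨δ, hδ, rfl⟩
    exact ⟨γ + δ, fun f => B.add_mem (hγ f) (hδ f), by
      simp [smul_add, Finset.sum_add_distrib]⟩

theorem resum {g : A} (hg : IsDerivedComplete g M) (s : Finset A) (B : Submodule A M)
    (m : ℕ → M) (hm : ∀ n, m n - g • m (n + 1) ∈ Ideal.span (↑s : Set A) • B) :
    m 0 ∈ Ideal.span (↑s : Set A) • (chainsMod g B) := by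
  choose γ hγB hγ using fun n => mem_span_finset_smul (hm n)
  choose cf hcf using fun f => hg.2 (fun n => γ n f)
  have hc : ∀ f n, cf f n - g • cf f (n + 1) = γ n f := fun f n => congrFun (hcf f) n
  have hkey : m = fun n => ∑ f ∈ s, f • cf f n := by
    apply hg.1
    funext n
    show m n - g • m (n + 1)
        = (∑ f ∈ s, f • cf f n) - g • ∑ f ∈ s, f • cf f (n + 1)
    rw [hγ n, Finset.smul_sum, ← Finset.sum_sub_distrib]
    refine Finset.sum_congr rfl fun f _ => ?_
    rw [← hc f n, smul_sub, smul_comm g f]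
  have h0 : m 0 = ∑ f ∈ s, f • cf f 0 := by rw [hkey]
  rw [h0]
  refine Submodule.sum_mem _ fun f hf => Submodule.smul_mem_smul (Ideal.subset_span hf) ?_
  exact ⟨cf f, rfl, fun n => by rw [hc f n]; exact hγB n f⟩

theorem lemC (s : Finset A) :
    (∀ f ∈ s, IsDerivedComplete f M) →
    ∀ P : Submodule A M, P ≤ Ideal.span (↑s : Set A) • P → P = ⊥ := by
  classical
  induction s using Finset.induction_on with
  | empty =>
    intro _ P hP
    rw [Finset.coe_empty, Ideal.span_empty, Submodule.bot_smul] at hP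
    exact le_bot_iff.mp hP
  | @insert g s' hg ih =>
    intro hcomp P hP
    have hgc : IsDerivedComplete g M := hcomp g (Finset.mem_insert_self g s')
    have hs'c : ∀ f ∈ s', IsDerivedComplete f M := fun f hf =>
      hcomp f (Finset.mem_insert_of_mem hf)
    set J : Ideal A := Ideal.span (↑s' : Set A) with hJ
    set Q : Submodule A M := chainsMod g P with hQ
    have hstep : ∀ p ∈ P, ∃ p' ∈ P, p - g • p' ∈ J • P := by
      intro p hp
      obtain ⟨γ, hγ, hsum⟩ := mem_span_finset_smul (hP hp)
      refine ⟨γ g, hγ g, ?_⟩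
      rw [hsum, Finset.sum_insert hg, add_sub_cancel_left]
      exact Submodule.sum_mem _ fun f hf =>
        Submodule.smul_mem_smul (Ideal.subset_span hf) (hγ f)
    have hPJQ : P ≤ J • Q := by
      intro p hp
      let F : {x // x ∈ P} → {x // x ∈ P} := fun x =>
        ⟨(hstep x.1 x.2).choose, (hstep x.1 x.2).choose_spec.1⟩
      let c : ℕ → {x // x ∈ P} := fun n => F^[n] ⟨p, hp⟩
      have hdef : ∀ n, (c n).1 - g • (c (n + 1)).1 ∈ J • P := by
        intro n
        have hcn : c (n + 1) = F (c n) := Function.iterate_succ_apply' F n _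
        rw [hcn]
        exact (hstep (c n).1 (c n).2).choose_spec.2
      have hres := resum hgc s' P (fun n => (c n).1) hdef
      exact hres
    have hQJQ : Q ≤ J • Q := by
      intro q hq
      obtain ⟨c, hc0, hc⟩ := mem_chainsMod.mp hq
      have hdef : ∀ n, c n - g • c (n + 1) ∈ J • Q := fun n => hPJQ (hc n)
      have hres := resum hgc s' Q c hdef
      rw [hc0] at hres
      exact Submodule.smul_mono le_rfl (chainsMod_idem g P) hres
    have hQbot : Q = ⊥ := ih hs'c Q hQJQ
    rw [hQbot, Submodule.smul_bot] at hPJQ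
    exact le_bot_iff.mp hPJQ

theorem lemA (f : A) (hf : IsDerivedComplete f M)
    (htor : ∀ m : M, ∃ k : ℕ, f ^ k • m = 0) :
    ∃ c : ℕ, ∀ m : M, f ^ c • m = 0 := by
  by_cases hA : ∃ c : ℕ, ∀ m : M, ∃ m' : M, f ^ c • m = f ^ (c + 1) • m'
  · obtain ⟨c, hc⟩ := hA
    refine ⟨c, fun m => ?_⟩
    choose nx hnx using hc
    let u : ℕ → M := fun n => nx^[n] m
    have hu : ∀ n, f ^ c • u n = f • (f ^ c • u (n + 1)) := by
      intro n
      have h1 : u (n + 1) = nx (u n) := Function.iterate_succ_apply' nx n m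
      rw [h1, hnx (u n), pow_succ', mul_smul]
    have hker : derivedCompletionPhi f M (fun n => f ^ c • u n)
        = derivedCompletionPhi f M 0 := by
      funext n
      simp [derivedCompletionPhi, ← hu n]
    have h0 := congrFun (hf.1 hker) 0
    simpa [u] using h0
  · exfalso
    push_neg at hA
    choose x hx using hA
    choose t ht using fun c => htor (x c)
    have htc : ∀ c, c + 1 ≤ t c := by
      intro c
      by_contra h
      push_neg at h
      have h2 : f ^ c • x c = f ^ (c + 1) • (0 : M) := by
        have h3 : f ^ c • x c = f ^ (c - t c) • (f ^ (t c) • x c) := by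
          rw [smul_smul, ← pow_add, Nat.sub_add_cancel (by omega : t c ≤ c)]
        rw [h3, ht c]; simp
      exact hx c 0 h2
    let cs : ℕ → ℕ := fun j => Nat.rec 0 (fun _ prev => prev + t prev + 1) j
    have hcs : ∀ j, cs (j + 1) = cs j + t (cs j) + 1 := fun j => rfl
    have hkey : ∀ j k, k < j → t (cs k) + j ≤ cs j + k := by
      intro j
      induction j with
      | zero => omega
      | succ j ihj =>
        intro k hk
        rcases Nat.lt_or_ge k j with h | h
        · have h1 := ihj k h
          have h2 : cs j + 1 ≤ cs (j + 1) := by rw [hcs j]; omega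
          omega
        · have hkj : k = j := by omega
          subst hkj
          rw [hcs k]; omega
    have hgrow : ∀ j, j + j ≤ cs j := by
      intro j
      induction j with
      | zero => simp
      | succ j ihj => have := htc (cs j); rw [hcs j]; omega
    obtain ⟨m, hm⟩ := hf.2 (fun k => x (cs k))
    have hmk : ∀ k, m k - f • m (k + 1) = x (cs k) := fun k => congrFun hm k
    have tel : ∀ K, m 0
        = (∑ k ∈ Finset.range K, f ^ k • (m k - f • m (k + 1))) + f ^ K • m K := by
      intro K
      induction K with
      | zero => simp
      | succ K ihK =>
        rw [Finset.sum_range_succ]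
        have h4 : f ^ (K + 1) • m (K + 1) = f ^ K • (f • m (K + 1)) := by
          rw [pow_succ, mul_smul]
        rw [h4, smul_sub, ihK]
        abel
    obtain ⟨N0, hN0⟩ := htor (m 0)
    set j := N0 with hjdef
    have hNle : j + j ≤ cs j := hgrow j
    set N := cs j - j with hNdef
    have hNj : N + j = cs j := by omega
    have h1 : f ^ N • m 0 = 0 := by
      have hN0N : N0 ≤ N := by omega
      have h5 : f ^ N • m 0 = f ^ (N - N0) • (f ^ N0 • m 0) := by
        rw [smul_smul, ← pow_add, Nat.sub_add_cancel hN0N]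
      rw [h5, hN0, smul_zero]
    have h2 := congrArg (fun z => f ^ N • z) (tel (j + 1))
    simp only [hmk, Finset.sum_range_succ, smul_add, Finset.smul_sum, smul_smul, ← pow_add]
      at h2
    have hzero : ∀ k ∈ Finset.range j, f ^ (N + k) • x (cs k) = 0 := by
      intro k hk
      have hk' := Finset.mem_range.mp hk
      have h6 := hkey j k hk'
      have h7 : t (cs k) ≤ N + k := by omega
      have h8 : f ^ (N + k) • x (cs k)
          = f ^ (N + k - t (cs k)) • (f ^ (t (cs k)) • x (cs k)) := by
        rw [smul_smul, ← pow_add, Nat.sub_add_cancel h7]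
      rw [h8, ht (cs k), smul_zero]
    rw [Finset.sum_congr rfl hzero, Finset.sum_const_zero, h1, zero_add] at h2
    have h10 : N + j = cs j := hNj
    have h11 : N + (j + 1) = cs j + 1 := by omega
    rw [h10, h11] at h2
    have h12 : f ^ (cs j) • x (cs j) = -(f ^ (cs j + 1) • m (j + 1)) :=
      add_eq_zero_iff_eq_neg.mp h2.symm
    exact hx (cs j) (-(m (j + 1))) (h12.trans (smul_neg _ _).symm)

end Aux

/-- Theorem 2.25 (Bhatt): for a derived `I`-complete module `M` over a commutative ring `A`
with `I ⊆ A` finitely generated, the following are equivalent: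
(1) `M[1/t] = 0` for all `t ∈ I`;
(2) there is `r ≥ 1` with `I^r • M = 0`;
(3) there is `r ≥ 1` such that `I^r • (M/I^n M) = 0` for all `n ≥ 1`. -/
theorem stmt1 {A : Type*} [CommRing A] (I : Ideal A) (hI : I.FG)
    (M : Type*) [AddCommGroup M] [Module A M]
    (hM : ∀ x ∈ I, IsDerivedComplete x M) :
    List.TFAE
      [ ∀ t ∈ I, Subsingleton (LocalizedModule (Submonoid.powers t) M),
        ∃ r : ℕ, 1 ≤ r ∧ ∀ a ∈ I ^ r, ∀ m : M, a • m = 0,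
        ∃ r : ℕ, 1 ≤ r ∧ ∀ n : ℕ, 1 ≤ n →
          ∀ a ∈ I ^ r, ∀ m : M, a • m ∈ (I ^ n • (⊤ : Submodule A M)) ] := by
  obtain ⟨s, hs⟩ := hI
  tfae_have 1 → 2 := by
    intro h1
    have hle : I ≤ (Module.annihilator A M).radical := by
      rw [← hs, Ideal.span_le]
      intro f hf
      have hfI : f ∈ I := by rw [← hs]; exact Ideal.subset_span hf
      have hsub := h1 f hfI
      have htor : ∀ m : M, ∃ k : ℕ, f ^ k • m = 0 := by
        intro m
        have heq : (LocalizedModule.mk m 1 :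
            LocalizedModule (Submonoid.powers f) M) = LocalizedModule.mk 0 1 :=
          Subsingleton.elim _ _
        rw [LocalizedModule.mk_eq] at heq
        obtain ⟨u, hu⟩ := heq
        obtain ⟨k, hk⟩ := u.2
        refine ⟨k, ?_⟩
        have hum : (u : A) • m = 0 := by
          simpa [Submonoid.smul_def] using hu
        have hk' : f ^ k = (u : A) := hk
        rw [hk']; exact hum
      obtain ⟨c, hc⟩ := lemA f (hM f hfI) htor
      exact Ideal.mem_radical_iff.mpr ⟨c, Module.mem_annihilator.mpr hc⟩
    obtain ⟨n, hn⟩ := Ideal.exists_pow_le_of_le_radical_of_fg hle ⟨s, hs⟩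
    refine ⟨n + 1, Nat.le_add_left 1 n, fun a ha m => ?_⟩
    exact Module.mem_annihilator.mp (hn (Ideal.pow_le_pow_right (Nat.le_succ n) ha)) m
  tfae_have 2 → 1 := by
    rintro ⟨r, hr1, hr⟩ t ht
    have hz : ∀ z : LocalizedModule (Submonoid.powers t) M, z = LocalizedModule.mk 0 1 := by
      intro z
      induction z using LocalizedModule.induction_on with
      | _ m ss =>
        rw [LocalizedModule.mk_eq]
        refine ⟨⟨t ^ r, ⟨r, rfl⟩⟩, ?_⟩
        have h0 : t ^ r • m = 0 := hr (t ^ r) (Ideal.pow_mem_pow ht r) m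
        simp [Submonoid.smul_def, h0]
    exact ⟨fun a b => by rw [hz a, hz b]⟩
  tfae_have 2 → 3 := by
    rintro ⟨r, hr1, hr⟩
    exact ⟨r, hr1, fun n hn a ha m => by rw [hr a ha m]; exact Submodule.zero_mem _⟩
  tfae_have 3 → 2 := by
    rintro ⟨r, hr1, hr⟩
    have hcomp : ∀ f ∈ s, IsDerivedComplete f M := fun f hf =>
      hM f (by rw [← hs]; exact Ideal.subset_span hf)
    have h1 : (I ^ r • ⊤ : Submodule A M) ≤ I ^ (r + 1) • ⊤ :=
      Submodule.smul_le.mpr fun a ha m _ => hr (r + 1) (by omega) a ha m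
    have h2 : (I ^ (r + 1) • ⊤ : Submodule A M) = I • (I ^ r • ⊤) := by
      rw [pow_succ', ← Ideal.smul_eq_mul, Submodule.smul_assoc]
    have hP : (I ^ r • ⊤ : Submodule A M)
        ≤ Ideal.span (↑s : Set A) • (I ^ r • ⊤ : Submodule A M) := by
      rw [hs]
      exact h1.trans (le_of_eq h2)
    have hbot := lemC s hcomp _ hP
    refine ⟨r, hr1, fun a ha m => ?_⟩
    have hmem : a • m ∈ (I ^ r • ⊤ : Submodule A M) :=
      Submodule.smul_mem_smul ha Submodule.mem_top
    rw [hbot] at hmem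
    simpa using hmem
  tfae_finish
end

section
/- Let A be a commutative ring and t ∈ A. Let M, N, P be A-modules with P derived t-complete, and let f : M → N and g : N → P be A-linear maps such that f is divisible by every power of t in Hom_A(M, N) (for every n there exists f_n with f = t^n · f_n) and g is divisible by every power of t in Hom_A(N, P). Then g ∘ f = 0. -/
/-- Lemma 2.24: if `P` is derived `t`-complete and `f : M → N`, `g : N → P` are both divisible
by all powers of `t` in the respective Hom-modules, then `g ∘ f = 0`. -/
theorem stmt3 {A : Type*} [CommRing A] (t : A)
    (M N P : Type*) [AddCommGroup M] [Module A M] [AddCommGroup N] [Module A N]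
    [AddCommGroup P] [Module A P]
    (hP : IsDerivedComplete t P)
    (f : M →ₗ[A] N) (g : N →ₗ[A] P)
    (hf : ∀ n : ℕ, ∃ fₙ : M →ₗ[A] N, f = t ^ n • fₙ)
    (hg : ∀ n : ℕ, ∃ gₙ : N →ₗ[A] P, g = t ^ n • gₙ) :
    g ∘ₗ f = 0 := by
  choose F hF using hf
  choose G hG using hg
  ext m
  simp only [LinearMap.comp_apply, LinearMap.zero_apply]
  -- `tⁿ • F n m = f m` for every `n`
  have hFm : ∀ n : ℕ, t ^ n • F n m = f m := by
    intro n
    rw [hF n]; simp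
  -- the element `F n m - t • F (n+1) m` is `tⁿ`-torsion
  have htor : ∀ n : ℕ, t ^ n • (F n m - t • F (n + 1) m) = 0 := by
    intro n
    rw [smul_sub, hFm n, smul_comm, smul_smul, mul_comm, ← pow_succ, hFm (n + 1), sub_self]
  -- hence `g` kills it, since `g` is divisible by `tⁿ`
  have hcoh : ∀ n : ℕ, g (F n m) - t • g (F (n + 1) m) = 0 := by
    intro n
    have : g (F n m - t • F (n + 1) m) = 0 := by
      rw [hG n]
      calc (t ^ n • G n) (F n m - t • F (n + 1) m)
          = t ^ n • G n (F n m - t • F (n + 1) m) := by simp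
        _ = G n (t ^ n • (F n m - t • F (n + 1) m)) := by rw [map_smul]
        _ = 0 := by rw [htor n, map_zero]
    rw [← this, map_sub, map_smul]
  -- the sequence `n ↦ g (F n m)` lies in the kernel of `Φ`, hence vanishes
  have hker : (fun n => g (F n m)) = fun _ => (0 : P) := by
    apply hP.1
    funext n
    show g (F n m) - t • g (F (n + 1) m) = (0 : P) - t • (0 : P)
    rw [hcoh n]; simp
  -- conclude: `g (f m) = g (F 0 m) = 0`
  have h0 : f m = F 0 m := by rw [← hFm 0]; simp
  rw [h0]
  exact congrFun hker 0
end

section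
/- Let A be a commutative ring and I ⊆ A an ideal. Suppose given a commutative diagram of A-modules with exact rows M₁ → M₂ → M₃ → M₄ → M₅ and N₁ → N₂ → N₃ → N₄ → N₅, with vertical maps f_i : M_i → N_i. If f₂ and f₅ are isomorphisms and f₄ is ≤I-surjective, then f₃ is ≤I-surjective. -/
/-- A map of `A`-modules is `≤I`-surjective if its cokernel is annihilated by `I`,
equivalently `a • y ∈ range f` for all `a ∈ I` and all `y` in the target. -/
def IsLeqSurjective {A : Type*} [CommRing A] (I : Ideal A) {M N : Type*}
    [AddCommGroup M] [Module A M] [AddCommGroup N] [Module A N] (f : M →ₗ[A] N) : Prop :=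
  ∀ a ∈ I, ∀ y : N, a • y ∈ LinearMap.range f

/-- Lemma 2.15 (a variant of the five lemma): given a commutative diagram of `A`-modules with
exact rows `M₁ → M₂ → M₃ → M₄ → M₅`, `N₁ → N₂ → N₃ → N₄ → N₅`, if `f₂`, `f₅` are isomorphisms
and `f₄` is `≤I`-surjective, then `f₃` is `≤I`-surjective. -/
theorem stmt4 {A : Type*} [CommRing A] (I : Ideal A)
    {M₁ M₂ M₃ M₄ M₅ N₁ N₂ N₃ N₄ N₅ : Type*}
    [AddCommGroup M₁] [Module A M₁] [AddCommGroup M₂] [Module A M₂]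
    [AddCommGroup M₃] [Module A M₃] [AddCommGroup M₄] [Module A M₄]
    [AddCommGroup M₅] [Module A M₅]
    [AddCommGroup N₁] [Module A N₁] [AddCommGroup N₂] [Module A N₂]
    [AddCommGroup N₃] [Module A N₃] [AddCommGroup N₄] [Module A N₄]
    [AddCommGroup N₅] [Module A N₅]
    (m₁ : M₁ →ₗ[A] M₂) (m₂ : M₂ →ₗ[A] M₃) (m₃ : M₃ →ₗ[A] M₄) (m₄ : M₄ →ₗ[A] M₅)
    (n₁ : N₁ →ₗ[A] N₂) (n₂ : N₂ →ₗ[A] N₃) (n₃ : N₃ →ₗ[A] N₄) (n₄ : N₄ →ₗ[A] N₅)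
    (f₁ : M₁ →ₗ[A] N₁) (f₂ : M₂ →ₗ[A] N₂) (f₃ : M₃ →ₗ[A] N₃) (f₄ : M₄ →ₗ[A] N₄)
    (f₅ : M₅ →ₗ[A] N₅)
    (hM₁₂ : Function.Exact m₁ m₂) (hM₂₃ : Function.Exact m₂ m₃)
    (hM₃₄ : Function.Exact m₃ m₄)
    (hN₁₂ : Function.Exact n₁ n₂) (hN₂₃ : Function.Exact n₂ n₃)
    (hN₃₄ : Function.Exact n₃ n₄)
    (hc₁ : f₂ ∘ₗ m₁ = n₁ ∘ₗ f₁) (hc₂ : f₃ ∘ₗ m₂ = n₂ ∘ₗ f₂)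
    (hc₃ : f₄ ∘ₗ m₃ = n₃ ∘ₗ f₃) (hc₄ : f₅ ∘ₗ m₄ = n₄ ∘ₗ f₄)
    (hf₂ : Function.Bijective f₂) (hf₅ : Function.Bijective f₅)
    (hf₄ : IsLeqSurjective I f₄) :
    IsLeqSurjective I f₃ := by
  intro a ha y
  -- lift a • n₃ y along f₄
  obtain ⟨x, hx⟩ := hf₄ a ha (n₃ y)
  -- f₅ (m₄ x) = 0
  have h5 : f₅ (m₄ x) = 0 := by
    have := congrFun (congrArg DFunLike.coe hc₄) x
    simp only [LinearMap.coe_comp, Function.comp_apply] at this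
    rw [this, hx, map_smul, (hN₃₄.apply_apply_eq_zero y), smul_zero]
  have hm4 : m₄ x = 0 := by
    have := hf₅.injective (a₂ := 0) (by simpa using h5)
    simpa using this
  obtain ⟨z, hz⟩ := hM₃₄ x |>.mp hm4
  -- n₃ (a • y - f₃ z) = 0
  have h3 : n₃ (a • y - f₃ z) = 0 := by
    have := congrFun (congrArg DFunLike.coe hc₃) z
    simp only [LinearMap.coe_comp, Function.comp_apply] at this
    rw [map_sub, map_smul, ← this, hz, hx, sub_self]
  obtain ⟨w, hw⟩ := hN₂₃ (a • y - f₃ z) |>.mp h3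
  obtain ⟨u, hu⟩ := hf₂.surjective w
  refine ⟨z + m₂ u, ?_⟩
  have := congrFun (congrArg DFunLike.coe hc₂) u
  simp only [LinearMap.coe_comp, Function.comp_apply] at this
  rw [map_add, this, hu, hw]
  abel
end

section
/- Let A be a commutative ring, C an A-linear additive category, I ⊆ A a finitely generated ideal, and P a full subcategory of C closed under finite direct sums and retracts. Then for an object X of C the following are equivalent: (1) X belongs to P_{≤I}; (2) there exists a ≤I-split surjection X' → X with X' in P; (3) there exists a ≤I-split injection X → X'' with X'' in P. -/
open CategoryTheory CategoryTheory.Limits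

universe v u w

open ZeroObject

/-- An object `X` belongs to `P_{≤I}` if for every `a ∈ I` there are `X₀ ∈ P` and maps
`f : X → X₀`, `g : X₀ → X` with `g ∘ f = a • id_X`. -/
def MemLeq {A : Type w} [CommRing A] {C : Type u} [Category.{v} C] [Preadditive C]
    [CategoryTheory.Linear A C] (I : Ideal A) (P : Set C) (X : C) : Prop :=
  ∀ a ∈ I, ∃ X₀ ∈ P, ∃ (f : X ⟶ X₀) (g : X₀ ⟶ X), f ≫ g = a • 𝟙 X

lemma aux_surj {A : Type w} [CommRing A] {C : Type u} [Category.{v} C] [Preadditive C]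
    [CategoryTheory.Linear A C] [HasFiniteBiproducts C] [HasBinaryBiproducts C]
    (P : Set C)
    (hzero : ∀ X : C, IsZero X → X ∈ P)
    (hsum : ∀ X Y : C, X ∈ P → Y ∈ P → (X ⊞ Y) ∈ P)
    (X : C) (s : Finset A)
    (hs : ∀ b ∈ s, ∃ X₀ ∈ P, ∃ (f : X ⟶ X₀) (g : X₀ ⟶ X), f ≫ g = b • 𝟙 X) :
    ∃ X' ∈ P, ∃ q : X' ⟶ X, ∀ a ∈ Ideal.span (s : Set A), ∃ g : X ⟶ X', g ≫ q = a • 𝟙 X := by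
  classical
  induction s using Finset.induction_on with
  | empty =>
    refine ⟨0, hzero _ (isZero_zero C), 0, ?_⟩
    intro a ha
    simp only [Finset.coe_empty, Ideal.span_empty, Ideal.mem_bot] at ha
    exact ⟨0, by simp [ha]⟩
  | @insert b t hb ih =>
    obtain ⟨X₀, hX₀, f₀, g₀, hfg⟩ := hs b (Finset.mem_insert_self b t)
    obtain ⟨X₁, hX₁, q₁, hq₁⟩ := ih (fun c hc => hs c (Finset.mem_insert_of_mem hc))
    refine ⟨X₀ ⊞ X₁, hsum _ _ hX₀ hX₁, biprod.desc g₀ q₁, ?_⟩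
    intro a ha
    rw [Finset.coe_insert, Ideal.mem_span_insert] at ha
    obtain ⟨c, z, hz, rfl⟩ := ha
    obtain ⟨gz, hgz⟩ := hq₁ z hz
    refine ⟨biprod.lift (c • f₀) gz, ?_⟩
    simp [hfg, hgz, smul_smul, add_smul]

lemma aux_inj {A : Type w} [CommRing A] {C : Type u} [Category.{v} C] [Preadditive C]
    [CategoryTheory.Linear A C] [HasFiniteBiproducts C] [HasBinaryBiproducts C]
    (P : Set C)
    (hzero : ∀ X : C, IsZero X → X ∈ P)
    (hsum : ∀ X Y : C, X ∈ P → Y ∈ P → (X ⊞ Y) ∈ P)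
    (X : C) (s : Finset A)
    (hs : ∀ b ∈ s, ∃ X₀ ∈ P, ∃ (f : X ⟶ X₀) (g : X₀ ⟶ X), f ≫ g = b • 𝟙 X) :
    ∃ X'' ∈ P, ∃ p : X ⟶ X'', ∀ a ∈ Ideal.span (s : Set A), ∃ g : X'' ⟶ X, p ≫ g = a • 𝟙 X := by
  classical
  induction s using Finset.induction_on with
  | empty =>
    refine ⟨0, hzero _ (isZero_zero C), 0, ?_⟩
    intro a ha
    simp only [Finset.coe_empty, Ideal.span_empty, Ideal.mem_bot] at ha
    exact ⟨0, by simp [ha]⟩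
  | @insert b t hb ih =>
    obtain ⟨X₀, hX₀, f₀, g₀, hfg⟩ := hs b (Finset.mem_insert_self b t)
    obtain ⟨X₁, hX₁, p₁, hp₁⟩ := ih (fun c hc => hs c (Finset.mem_insert_of_mem hc))
    refine ⟨X₀ ⊞ X₁, hsum _ _ hX₀ hX₁, biprod.lift f₀ p₁, ?_⟩
    intro a ha
    rw [Finset.coe_insert, Ideal.mem_span_insert] at ha
    obtain ⟨c, z, hz, rfl⟩ := ha
    obtain ⟨gz, hgz⟩ := hp₁ z hz
    refine ⟨biprod.desc (c • g₀) gz, ?_⟩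
    simp [hfg, hgz, smul_smul, add_smul]

/-- Proposition 2.7: for a finitely generated ideal `I` and a full subcategory `P` of an
`A`-linear additive category `C` closed under finite direct sums and retracts, `X ∈ P_{≤I}`
iff there is a `≤I`-split surjection `X' → X` with `X' ∈ P` iff there is a `≤I`-split
injection `X → X''` with `X'' ∈ P`. -/
theorem stmt5 {A : Type w} [CommRing A] {C : Type u} [Category.{v} C] [Preadditive C]
    [CategoryTheory.Linear A C] [HasFiniteBiproducts C] [HasBinaryBiproducts C]
    (I : Ideal A) (hI : I.FG) (P : Set C)
    (hzero : ∀ X : C, IsZero X → X ∈ P)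
    (hsum : ∀ X Y : C, X ∈ P → Y ∈ P → (X ⊞ Y) ∈ P)
    (hretract : ∀ (X Y : C) (i : X ⟶ Y) (r : Y ⟶ X), i ≫ r = 𝟙 X → Y ∈ P → X ∈ P)
    (X : C) :
    List.TFAE
      [ MemLeq I P X,
        ∃ X' ∈ P, ∃ f : X' ⟶ X, ∀ a ∈ I, ∃ g : X ⟶ X', g ≫ f = a • 𝟙 X,
        ∃ X'' ∈ P, ∃ f : X ⟶ X'', ∀ a ∈ I, ∃ g : X'' ⟶ X, f ≫ g = a • 𝟙 X ] := by
  obtain ⟨s, rfl⟩ := hI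
  tfae_have 1 → 2 := by
    intro h
    obtain ⟨X', hX', q, hq⟩ := aux_surj P hzero hsum X s
      (fun b hb => h b (Ideal.subset_span hb))
    exact ⟨X', hX', q, hq⟩
  tfae_have 1 → 3 := by
    intro h
    obtain ⟨X'', hX'', p, hp⟩ := aux_inj P hzero hsum X s
      (fun b hb => h b (Ideal.subset_span hb))
    exact ⟨X'', hX'', p, hp⟩
  tfae_have 2 → 1 := by
    rintro ⟨X', hX', f, hf⟩ a ha
    obtain ⟨g, hg⟩ := hf a ha
    exact ⟨X', hX', g, f, hg⟩
  tfae_have 3 → 1 := by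
    rintro ⟨X'', hX'', f, hf⟩ a ha
    obtain ⟨g, hg⟩ := hf a ha
    exact ⟨X'', hX'', f, g, hg⟩
  tfae_finish
end

section
/- Let A be a commutative ring, C an A-linear additive category, and I ⊆ A a finitely generated ideal. Suppose P is the union of a family of full subcategories P_α of C, each closed under finite direct sums and retracts, which is filtered in the sense that any two P_α, P_β are contained in a third. Then P_{≤I} is the union of the subcategories (P_α)_{≤I}. -/
open CategoryTheory CategoryTheory.Limits ZeroObject

universe v u w t

/-- Corollary 2.8: if `P` is the union of a filtered family of full subcategories `P_α`, each
closed under finite direct sums and retracts, and `I` is finitely generated, then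
`P_{≤I} = ⋃_α (P_α)_{≤I}`. -/
theorem stmt6 {A : Type w} [CommRing A] {C : Type u} [Category.{v} C] [Preadditive C]
    [CategoryTheory.Linear A C] [HasFiniteBiproducts C] [HasBinaryBiproducts C]
    (I : Ideal A) (hI : I.FG) {ι : Type t} (P : ι → Set C)
    (hzero : ∀ α, ∀ X : C, IsZero X → X ∈ P α)
    (hsum : ∀ α, ∀ X Y : C, X ∈ P α → Y ∈ P α → (X ⊞ Y) ∈ P α)
    (hretract : ∀ α, ∀ (X Y : C) (i : X ⟶ Y) (r : Y ⟶ X), i ≫ r = 𝟙 X → Y ∈ P α → X ∈ P α)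
    (hfiltered : ∀ α β : ι, ∃ γ : ι, P α ⊆ P γ ∧ P β ⊆ P γ)
    (X : C) :
    MemLeq I (⋃ α, P α) X ↔ ∃ α, MemLeq I (P α) X := by
  classical
  -- the witness predicate
  set W : ι → A → Prop := fun α a =>
    ∃ X₀ ∈ P α, ∃ (f : X ⟶ X₀) (g : X₀ ⟶ X), f ≫ g = a • 𝟙 X with hW
  have Wmono : ∀ {α β : ι}, P α ⊆ P β → ∀ {a : A}, W α a → W β a := by
    rintro α β hαβ a ⟨X₀, hX₀, f, g, hfg⟩
    exact ⟨X₀, hαβ hX₀, f, g, hfg⟩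
  constructor
  · intro h
    -- get some index from the witness for 0
    obtain ⟨Z, hZ, -⟩ := h 0 I.zero_mem
    obtain ⟨α₀, hα₀⟩ := Set.mem_iUnion.mp hZ
    obtain ⟨s, hs⟩ := hI
    -- every generator has a witness at some index
    have hgen : ∀ a ∈ s, ∃ α, W α a := by
      intro a ha
      obtain ⟨X₀, hX₀, f, g, hfg⟩ := h a (hs ▸ Ideal.subset_span ha)
      obtain ⟨α, hα⟩ := Set.mem_iUnion.mp hX₀
      exact ⟨α, X₀, hα, f, g, hfg⟩
    -- find a common index for all generators
    have key : ∀ t : Finset A, (∀ a ∈ t, ∃ α, W α a) → ∃ γ, ∀ a ∈ t, W γ a := by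
      intro t
      induction t using Finset.induction_on with
      | empty => intro _; exact ⟨α₀, by simp⟩
      | insert _ _ hb ih =>
        rename_i b t'
        intro ht
        obtain ⟨γ, hγ⟩ := ih (fun a ha => ht a (Finset.mem_insert_of_mem ha))
        obtain ⟨β, hβ⟩ := ht b (Finset.mem_insert_self b t')
        obtain ⟨δ, hγδ, hβδ⟩ := hfiltered γ β
        refine ⟨δ, fun a ha => ?_⟩
        rcases Finset.mem_insert.mp ha with rfl | ha
        · exact Wmono hβδ hβ
        · exact Wmono hγδ (hγ a ha)
    obtain ⟨γ, hγ⟩ := key s hgen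
    refine ⟨γ, fun a ha => ?_⟩
    -- show W γ holds on all of I by span induction
    have ha' : a ∈ Ideal.span (s : Set A) := hs ▸ ha
    refine Submodule.span_induction (fun x hx => hγ x hx) ?_ ?_ ?_ ha'
    · exact ⟨0, hzero γ 0 (isZero_zero C), 0, 0, by simp⟩
    · rintro x y - - ⟨X₀, hX₀, f, g, hfg⟩ ⟨Y₀, hY₀, f', g', hfg'⟩
      refine ⟨X₀ ⊞ Y₀, hsum γ X₀ Y₀ hX₀ hY₀, biprod.lift f f', biprod.desc g g', ?_⟩
      rw [biprod.lift_desc, hfg, hfg', add_smul]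
    · rintro c x - ⟨X₀, hX₀, f, g, hfg⟩
      refine ⟨X₀, hX₀, c • f, g, ?_⟩
      rw [Linear.smul_comp, hfg, smul_smul, smul_eq_mul]
  · rintro ⟨α, hα⟩ a ha
    obtain ⟨X₀, hX₀, f, g, hfg⟩ := hα a ha
    exact ⟨X₀, Set.mem_iUnion.mpr ⟨α, hX₀⟩, f, g, hfg⟩
end

section
/- Let A be a commutative ring, C an A-linear additive category, and I ⊆ A an ideal. A morphism f : X → Y in C is a ≤I-isogeny if and only if for every a ∈ I there exists a morphism g_a : Y → X such that f ∘ g_a = a · id_Y and g_a ∘ f = a · id_X. -/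
open CategoryTheory

universe v u w

/-- Proposition 2.13 together with Remark 2.14: in an `A`-linear additive (1-)category, a
morphism `f : X → Y` is a `≤I`-isogeny (in the sense of the arrow category, i.e. for every
`a ∈ I` it admits a two-sided factorization through an isomorphism with composites `a • id`)
if and only if for every `a ∈ I` there is `g_a : Y → X` with `f ∘ g_a = a • id_Y` and
`g_a ∘ f = a • id_X`. -/
theorem stmt7 {A : Type w} [CommRing A] {C : Type u} [Category.{v} C] [Preadditive C]
    [CategoryTheory.Linear A C] (I : Ideal A) {X Y : C} (f : X ⟶ Y) :
    (∀ a ∈ I, ∃ (X₀ Y₀ : C) (u : X₀ ≅ Y₀) (p : X ⟶ X₀) (q : Y ⟶ Y₀)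
      (p' : X₀ ⟶ X) (q' : Y₀ ⟶ Y),
        p ≫ u.hom = f ≫ q ∧ u.hom ≫ q' = p' ≫ f ∧
        p ≫ p' = a • 𝟙 X ∧ q ≫ q' = a • 𝟙 Y) ↔
    (∀ a ∈ I, ∃ g : Y ⟶ X, g ≫ f = a • 𝟙 Y ∧ f ≫ g = a • 𝟙 X) := by
  constructor
  · intro h a ha
    obtain ⟨X₀, Y₀, u, p, q, p', q', h1, h2, h3, h4⟩ := h a ha
    refine ⟨q ≫ u.inv ≫ p', ?_, ?_⟩
    · rw [Category.assoc, Category.assoc, ← h2, Iso.inv_hom_id_assoc, h4]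
    · rw [← Category.assoc, ← h1, Category.assoc, Iso.hom_inv_id_assoc, h3]
  · intro h a ha
    obtain ⟨g, hg1, hg2⟩ := h a ha
    refine ⟨X, X, Iso.refl X, a • 𝟙 X, g, 𝟙 X, f, ?_, ?_, ?_, ?_⟩
    · simp [hg2]
    · simp
    · simp
    · exact hg1
end

section
/- Let A be a commutative ring, C an A-linear additive category, and let P, Q be full subcategories of C closed under finite direct sums and retracts. Let I, J ⊆ A be ideals. Let W denote the full subcategory of the arrow category Fun(Δ¹, C) consisting of arrows X → Y with X in P and Y in Q. Then every arrow X' → Y' in Fun(Δ¹, C) with X' in P_{≤I} and Y' in Q_{≤J} belongs to W_{≤IJ}. -/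
open CategoryTheory CategoryTheory.Limits

universe v u w

/-- Proposition 2.17: if `P, Q ⊆ C` are full subcategories closed under finite direct sums and
retracts, `I, J ⊆ A` are ideals, and `W` is the subcategory of the arrow category consisting
of arrows with source in `P` and target in `Q`, then any arrow `h' : X' → Y'` with
`X' ∈ P_{≤I}` and `Y' ∈ Q_{≤J}` belongs to `W_{≤IJ}`: for every `a ∈ I*J` there are an arrow
`h₀ : X₀ → Y₀` with `X₀ ∈ P`, `Y₀ ∈ Q` and morphisms of arrows `(f₁,f₂) : h' → h₀` and
`(g₁,g₂) : h₀ → h'` whose composite is `a • id` in the arrow category. -/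
theorem stmt9 {A : Type w} [CommRing A] {C : Type u} [Category.{v} C] [Preadditive C]
    [CategoryTheory.Linear A C] [HasFiniteBiproducts C] [HasBinaryBiproducts C]
    (I J : Ideal A) (P Q : Set C)
    (hzeroP : ∀ X : C, IsZero X → X ∈ P)
    (hsumP : ∀ X Y : C, X ∈ P → Y ∈ P → (X ⊞ Y) ∈ P)
    (hretractP : ∀ (X Y : C) (i : X ⟶ Y) (r : Y ⟶ X), i ≫ r = 𝟙 X → Y ∈ P → X ∈ P)
    (hzeroQ : ∀ X : C, IsZero X → X ∈ Q)
    (hsumQ : ∀ X Y : C, X ∈ Q → Y ∈ Q → (X ⊞ Y) ∈ Q)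
    (hretractQ : ∀ (X Y : C) (i : X ⟶ Y) (r : Y ⟶ X), i ≫ r = 𝟙 X → Y ∈ Q → X ∈ Q)
    {X' Y' : C} (h' : X' ⟶ Y')
    (hX : MemLeq I P X') (hY : MemLeq J Q Y') :
    ∀ a ∈ I * J, ∃ (X₀ Y₀ : C) (h₀ : X₀ ⟶ Y₀), X₀ ∈ P ∧ Y₀ ∈ Q ∧
      ∃ (f₁ : X' ⟶ X₀) (f₂ : Y' ⟶ Y₀) (g₁ : X₀ ⟶ X') (g₂ : Y₀ ⟶ Y'),
        f₁ ≫ h₀ = h' ≫ f₂ ∧ g₁ ≫ h' = h₀ ≫ g₂ ∧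
        f₁ ≫ g₁ = a • 𝟙 X' ∧ f₂ ≫ g₂ = a • 𝟙 Y' := by
  intro a ha
  refine Submodule.mul_induction_on ha ?_ ?_
  · intro i hi j hj
    obtain ⟨X₀, hX₀, f, g, hfg⟩ := hX i hi
    obtain ⟨Y₀, hY₀, u, v, huv⟩ := hY j hj
    refine ⟨X₀, Y₀, g ≫ h' ≫ u, hX₀, hY₀, f, i • u, j • g, v, ?_, ?_, ?_, ?_⟩
    · simp [← Category.assoc, hfg]
    · simp [Category.assoc, huv]
    · rw [Linear.comp_smul, hfg, smul_smul, mul_comm]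
    · rw [Linear.smul_comp, huv, smul_smul]
  · rintro a b ⟨Xa, Ya, ha0, hXa, hYa, f₁a, f₂a, g₁a, g₂a, sq1a, sq2a, ca, da⟩
      ⟨Xb, Yb, hb0, hXb, hYb, f₁b, f₂b, g₁b, g₂b, sq1b, sq2b, cb, db⟩
    refine ⟨Xa ⊞ Xb, Ya ⊞ Yb, biprod.map ha0 hb0, hsumP _ _ hXa hXb, hsumQ _ _ hYa hYb,
      biprod.lift f₁a f₁b, biprod.lift f₂a f₂b, biprod.desc g₁a g₁b, biprod.desc g₂a g₂b,
      ?_, ?_, ?_, ?_⟩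
    · ext <;> simp [sq1a, sq1b]
    · ext <;> simp [sq2a, sq2b]
    · simp [biprod.lift_desc, ca, cb, add_smul]
    · simp [biprod.lift_desc, da, db, add_smul]
end

section
/- Let A be a commutative ring, I ⊆ A a finitely generated ideal, and M an A-module. Then M is ≤I-finitely generated if and only if there exist a finitely generated A-module N and a ≤I-isogeny u : N → M, i.e. an A-linear map u such that for every a ∈ I there exists v_a : M → N with u ∘ v_a = a · id_M and v_a ∘ u = a · id_N. -/
universe u v

/-- An `A`-module `M` is `≤J`-finitely generated if for every `a ∈ J` there are a finitely
generated module `F` and maps `f : M → F`, `g : F → M` with `g ∘ f = a • id`. -/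
def IsLeqFinitelyGenerated {A : Type u} [CommRing A] (J : Ideal A) (M : Type v)
    [AddCommGroup M] [Module A M] : Prop :=
  ∀ a ∈ J, ∃ (F : Type v) (_ : AddCommGroup F) (_ : Module A F), Module.Finite A F ∧
    ∃ (f : M →ₗ[A] F) (g : F →ₗ[A] M), g ∘ₗ f = a • (LinearMap.id : M →ₗ[A] M)

/-- The claim of Definition 2.20: for a finitely generated ideal `I`, an `A`-module `M` is
`≤I`-finitely generated if and only if it is `≤I`-isogenous to a finitely generated module,
i.e. there are a finitely generated module `N` and a map `u : N → M` such that for every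
`a ∈ I` there is `v_a : M → N` with `u ∘ v_a = a • id_M` and `v_a ∘ u = a • id_N`. -/
theorem stmt11 {A : Type u} [CommRing A] (I : Ideal A) (hI : I.FG)
    (M : Type v) [AddCommGroup M] [Module A M] :
    IsLeqFinitelyGenerated I M ↔
      ∃ (N : Type v) (_ : AddCommGroup N) (_ : Module A N), Module.Finite A N ∧
        ∃ u : N →ₗ[A] M, ∀ a ∈ I, ∃ v : M →ₗ[A] N,
          u ∘ₗ v = a • (LinearMap.id : M →ₗ[A] M) ∧
          v ∘ₗ u = a • (LinearMap.id : N →ₗ[A] N) := by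
  constructor
  · intro h
    obtain ⟨S, hS⟩ := hI
    choose F hac hmod hfin f g hfg using h
    -- the submodule of M generated by images of the g's (for generators)
    let mem : ∀ s ∈ S, (s : A) ∈ I := fun s hs => hS ▸ Ideal.subset_span hs
    classical
    let Nsub : Submodule A M :=
      S.attach.sup (fun s => LinearMap.range (g s.1 (mem s.1 s.2)))
    have hNfg : Nsub.FG := by
      apply Submodule.fg_finset_sup
      intro s _
      have := hfin s.1 (mem s.1 s.2)
      exact Module.Finite.iff_fg.mp (Module.Finite.range (g s.1 (mem s.1 s.2)))
    refine ⟨Nsub, inferInstance, inferInstance, (Module.Finite.iff_fg).2 hNfg,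
      Nsub.subtype, ?_⟩
    -- from u∘v = a•id, get v∘u = a•id for the inclusion u
    have key : ∀ a : A, (∃ v : M →ₗ[A] Nsub,
        Nsub.subtype ∘ₗ v = a • (LinearMap.id : M →ₗ[A] M)) →
        ∃ v : M →ₗ[A] Nsub,
          Nsub.subtype ∘ₗ v = a • (LinearMap.id : M →ₗ[A] M) ∧
          v ∘ₗ Nsub.subtype = a • (LinearMap.id : Nsub →ₗ[A] Nsub) := by
      intro a ⟨v, hv⟩
      refine ⟨v, hv, ?_⟩
      ext x
      have h2 := congrArg (fun φ : M →ₗ[A] M => φ (x : M)) hv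
      simp only [LinearMap.coe_comp, Function.comp_apply, LinearMap.smul_apply,
        LinearMap.id_coe, id_eq, Submodule.coe_subtype] at h2 ⊢
      simpa using h2
    intro a ha
    apply key
    rw [← hS] at ha
    induction ha using Submodule.span_induction with
    | mem s hs =>
        have hrange : ∀ m : M, g s (mem s hs) (f s (mem s hs) m) ∈ Nsub := by
          intro m
          have h1 : LinearMap.range (g s (mem s hs)) ≤ Nsub :=
            Finset.le_sup (f := fun t : {x // x ∈ S} =>
              LinearMap.range (g t.1 (mem t.1 t.2))) (S.mem_attach ⟨s, hs⟩)
          exact h1 ⟨_, rfl⟩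
        refine ⟨LinearMap.codRestrict Nsub ((g s (mem s hs)) ∘ₗ (f s (mem s hs)))
          (fun m => hrange m), ?_⟩
        ext m
        have := congrArg (fun φ : M →ₗ[A] M => φ m) (hfg s (mem s hs))
        simpa using this
    | zero => exact ⟨0, by ext m; simp⟩
    | add x y _ _ hx hy =>
        obtain ⟨v₁, hv₁⟩ := hx
        obtain ⟨v₂, hv₂⟩ := hy
        refine ⟨v₁ + v₂, ?_⟩
        rw [add_smul, ← hv₁, ← hv₂]
        ext m; simp
    | smul c x _ hx =>
        obtain ⟨v, hv⟩ := hx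
        refine ⟨c • v, ?_⟩
        rw [smul_eq_mul, mul_smul, ← hv]
        ext m; simp
  · rintro ⟨N, _, _, hfin, u, hu⟩ a ha
    obtain ⟨v, hv, _⟩ := hu a ha
    exact ⟨N, inferInstance, inferInstance, hfin, v, u, hv⟩
end
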